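/- For α ≥ 0, the integral ∫_0^α x²·Φ(τx)·φ(x) dx equals I₁(α) − α·φ(α)·Φ(τα) + ρσ·(φ(0)² − φ(α)·φ(τα)), where I₁(α) = Φ(α) − 1/2 − [Φ₂(α, 0; ρ) − Φ₂(0, 0; ρ)], σ = 1/√(1+τ²), and ρ = τσ. -/

import Mathlib

open MeasureTheory Real

/-- Standard normal pdf. -/
noncomputable def gpdf (x : ℝ) : ℝ := (Real.sqrt (2 * Real.pi))⁻¹ * Real.exp (-x ^ 2 / 2)

/-- Standard normal cdf. -/
noncomputable def gcdf (x : ℝ) : ℝ := ∫ t in Set.Iic x, gpdf t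

/-- Bivariate standard normal density with correlation ρ. -/
noncomputable def bvpdf (ρ x y : ℝ) : ℝ :=
  (2 * Real.pi * Real.sqrt (1 - ρ ^ 2))⁻¹ *
    Real.exp (-(x ^ 2 - 2 * ρ * x * y + y ^ 2) / (2 * (1 - ρ ^ 2)))

/-- Bivariate standard normal cdf Φ₂(a, b; ρ). -/
noncomputable def bvcdf (ρ a b : ℝ) : ℝ :=
  ∫ x in Set.Iic a, ∫ y in Set.Iic b, bvpdf ρ x y

lemma continuous_gpdf : Continuous gpdf := by
  unfold gpdf; fun_prop

lemma integrable_gpdf : Integrable gpdf := by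
  have h := (integrable_exp_neg_mul_sq (show (0:ℝ) < 1/2 by norm_num)).const_mul
    (Real.sqrt (2 * Real.pi))⁻¹
  unfold gpdf
  convert h using 2 with x
  ring_nf

lemma gpdf_nonneg (x : ℝ) : 0 ≤ gpdf x := by
  unfold gpdf; positivity

lemma integral_gpdf : ∫ x, gpdf x = 1 := by
  have h : ∫ x : ℝ, Real.exp (-(1/2) * x ^ 2) = Real.sqrt (Real.pi / (1/2)) :=
    integral_gaussian (1/2)
  unfold gpdf
  rw [MeasureTheory.integral_const_mul]
  have : ∀ x : ℝ, Real.exp (-x^2/2) = Real.exp (-(1/2) * x^2) := by intro x; ring_nf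
  simp_rw [this, h]
  rw [show Real.pi / (1/2) = 2 * Real.pi by ring]
  rw [inv_mul_cancel₀ (by positivity)]

lemma gcdf_sub (a b : ℝ) : gcdf b - gcdf a = ∫ x in a..b, gpdf x :=
  intervalIntegral.integral_Iic_sub_Iic integrable_gpdf.integrableOn integrable_gpdf.integrableOn

lemma hasDerivAt_gcdf (x : ℝ) : HasDerivAt gcdf (gpdf x) x := by
  have h : HasDerivAt (fun u => ∫ t in (0:ℝ)..u, gpdf t) (gpdf x) x :=
    intervalIntegral.integral_hasDerivAt_right (integrable_gpdf.intervalIntegrable)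
      (continuous_gpdf.stronglyMeasurableAtFilter _ _) continuous_gpdf.continuousAt
  have hg : gcdf = fun u => gcdf 0 + ∫ t in (0:ℝ)..u, gpdf t := by
    funext u; rw [← gcdf_sub]; ring
  rw [hg]
  exact h.const_add _

lemma continuous_gcdf : Continuous gcdf :=
  continuous_iff_continuousAt.2 fun x => (hasDerivAt_gcdf x).continuousAt

lemma gcdf_nonneg (x : ℝ) : 0 ≤ gcdf x :=
  setIntegral_nonneg measurableSet_Iic fun t _ => gpdf_nonneg t

lemma gcdf_le_one (x : ℝ) : gcdf x ≤ 1 := by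
  rw [← integral_gpdf]
  exact setIntegral_le_integral integrable_gpdf (Filter.Eventually.of_forall gpdf_nonneg)

lemma gpdf_neg (x : ℝ) : gpdf (-x) = gpdf x := by unfold gpdf; ring_nf

lemma gcdf_neg (x : ℝ) : gcdf (-x) = 1 - gcdf x := by
  have h1 : gcdf (-x) = ∫ t in Set.Ioi x, gpdf t := by
    unfold gcdf
    have := integral_comp_neg_Iic (-x) gpdf
    simp only [gpdf_neg, neg_neg] at this
    rw [this]
  have h2 : gcdf x + ∫ t in Set.Ioi x, gpdf t = 1 := by
    rw [← integral_gpdf]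
    exact intervalIntegral.integral_Iic_add_Ioi integrable_gpdf.integrableOn integrable_gpdf.integrableOn
  linarith [h1, h2]

lemma gcdf_zero : gcdf 0 = 1/2 := by
  have := gcdf_neg 0
  rw [neg_zero] at this
  linarith

lemma hasDerivAt_gpdf (x : ℝ) : HasDerivAt gpdf (-x * gpdf x) x := by
  have h1 : HasDerivAt (fun y : ℝ => -y^2/2) (-x) x := by
    have := ((hasDerivAt_pow 2 x).neg).div_const 2
    refine this.congr_deriv ?_
    simp; ring
  have h2 := (h1.exp).const_mul (Real.sqrt (2*Real.pi))⁻¹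
  have hg : gpdf = fun y : ℝ => (Real.sqrt (2*Real.pi))⁻¹ * Real.exp (-y^2/2) := rfl
  rw [hg]
  refine h2.congr_deriv ?_
  show _ = -x * ((Real.sqrt (2*Real.pi))⁻¹ * Real.exp (-x ^ 2 / 2))
  ring

lemma integral_Iic_gpdf_affine {σ : ℝ} (hσ : 0 < σ) (c b : ℝ) :
    ∫ y in Set.Iic b, gpdf ((y - c) / σ) = σ * gcdf ((b - c) / σ) := by
  have key : ∀ y : ℝ, (Set.Iic b).indicator (fun y => gpdf ((y - c)/σ)) y
      = (Set.Iic ((b-c)/σ)).indicator gpdf ((y - c)/σ) := by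
    intro y
    have hiff : (y - c)/σ ≤ (b - c)/σ ↔ y ≤ b := by
      rw [div_le_div_iff_of_pos_right hσ, sub_le_sub_iff_right]
    by_cases hy : y ≤ b
    · rw [Set.indicator_of_mem (Set.mem_Iic.2 hy),
        Set.indicator_of_mem (Set.mem_Iic.2 (hiff.2 hy))]
    · rw [Set.indicator_of_notMem (fun h => hy (Set.mem_Iic.1 h)),
        Set.indicator_of_notMem (fun h => hy (hiff.1 (Set.mem_Iic.1 h)))]
  calc ∫ y in Set.Iic b, gpdf ((y-c)/σ)
      = ∫ y : ℝ, (Set.Iic ((b-c)/σ)).indicator gpdf ((y-c)/σ) := by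
        rw [← MeasureTheory.integral_indicator measurableSet_Iic]
        exact integral_congr_ae (Filter.Eventually.of_forall key)
    _ = ∫ y : ℝ, (Set.Iic ((b-c)/σ)).indicator gpdf (y/σ) :=
        integral_sub_right_eq_self (fun y => (Set.Iic ((b-c)/σ)).indicator gpdf (y/σ)) c
    _ = |σ| • ∫ y : ℝ, (Set.Iic ((b-c)/σ)).indicator gpdf y :=
        MeasureTheory.Measure.integral_comp_div _ σ
    _ = σ * gcdf ((b-c)/σ) := by
        rw [MeasureTheory.integral_indicator measurableSet_Iic, abs_of_pos hσ, smul_eq_mul]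
        rfl

lemma exp_arg_eq {ρ σ x y : ℝ} (hσ : σ ≠ 0) (h1ρ : 1 - ρ^2 = σ^2) :
    -(x ^ 2 - 2 * ρ * x * y + y ^ 2) / (2 * (1 - ρ ^ 2))
      = -x^2/2 + -(((y - ρ*x)/σ)^2)/2 := by
  rw [h1ρ]
  field_simp
  linear_combination (-x^2) * h1ρ

lemma bvpdf_eq' {ρ σ x y : ℝ} (hσ : 0 < σ) (h1ρ : 1 - ρ^2 = σ^2) :
    bvpdf ρ x y = gpdf x * (σ⁻¹ * gpdf ((y - ρ*x)/σ)) := by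
  have hsqrt : Real.sqrt (1 - ρ^2) = σ := by rw [h1ρ, Real.sqrt_sq hσ.le]
  unfold bvpdf gpdf
  rw [hsqrt, exp_arg_eq hσ.ne' h1ρ, Real.exp_add]
  have h2π : Real.sqrt (2*Real.pi) * Real.sqrt (2*Real.pi) = 2 * Real.pi :=
    Real.mul_self_sqrt (by positivity)
  have hc : (2*Real.pi*σ)⁻¹ = (Real.sqrt (2*Real.pi) * Real.sqrt (2*Real.pi) * σ)⁻¹ := by
    rw [h2π]
  rw [hc, mul_inv, mul_inv]
  ring

lemma bvcdf_eq (τ a : ℝ) :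
    bvcdf (τ * (1 / Real.sqrt (1 + τ^2))) a 0
      = ∫ x in Set.Iic a, gcdf (-(τ*x)) * gpdf x := by
  have h1τ : (0:ℝ) < 1 + τ^2 := by positivity
  have hs : 0 < Real.sqrt (1 + τ^2) := Real.sqrt_pos.2 h1τ
  have hss : Real.sqrt (1 + τ^2)^2 = 1 + τ^2 := Real.sq_sqrt h1τ.le
  set s : ℝ := Real.sqrt (1 + τ^2) with hs_def
  have hσ : (0:ℝ) < 1/s := by positivity
  have h1ρ : 1 - (τ * (1/s))^2 = (1/s)^2 := by
    have h2 : (1/s)^2 = 1/(1+τ^2) := by rw [div_pow, one_pow, hss]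
    rw [mul_pow, h2]
    field_simp
    ring
  have hinner : ∀ x, (∫ y in Set.Iic (0:ℝ), bvpdf (τ * (1/s)) x y)
      = gcdf (-(τ*x)) * gpdf x := by
    intro x
    simp_rw [bvpdf_eq' hσ h1ρ]
    rw [MeasureTheory.integral_const_mul, MeasureTheory.integral_const_mul,
      integral_Iic_gpdf_affine hσ (τ * (1/s) * x) 0]
    have harg : (0 - τ * (1/s)*x)/(1/s) = -(τ*x) := by field_simp; ring
    rw [harg, inv_mul_cancel_left₀ hσ.ne']
    ring
  unfold bvcdf
  exact integral_congr_ae (Filter.Eventually.of_forall fun x => hinner x)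

/-- For α ≥ 0, τ ∈ ℝ, σ = 1/√(1+τ²), ρ = τσ,
∫₀^α x²Φ(τx)φ(x)dx = I₁(α) − αφ(α)Φ(τα) + ρσ(φ(0)² − φ(α)φ(τα)), where
I₁(α) = Φ(α) − 1/2 − (Φ₂(α,0;ρ) − Φ₂(0,0;ρ)). -/
theorem stmt12 (α τ : ℝ) (hα : 0 ≤ α) :
    let σ : ℝ := 1 / Real.sqrt (1 + τ ^ 2)
    let ρ : ℝ := τ * σ
    let I₁ : ℝ := gcdf α - 1 / 2 - (bvcdf ρ α 0 - bvcdf ρ 0 0)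
    (∫ x in (0 : ℝ)..α, x ^ 2 * gcdf (τ * x) * gpdf x) =
      I₁ - α * gpdf α * gcdf (τ * α) + ρ * σ * (gpdf 0 ^ 2 - gpdf α * gpdf (τ * α)) := by
  intro σ ρ I₁
  have h1τ : (0:ℝ) < 1 + τ^2 := by positivity
  have hs : 0 < Real.sqrt (1 + τ^2) := Real.sqrt_pos.2 h1τ
  have hss : Real.sqrt (1 + τ^2)^2 = 1 + τ^2 := Real.sq_sqrt h1τ.le
  have hρ_def : ρ = τ * (1 / Real.sqrt (1 + τ^2)) := rfl
  have hρσ : ρ * σ = τ / (1 + τ^2) := by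
    show τ * (1 / Real.sqrt (1 + τ^2)) * (1 / Real.sqrt (1 + τ^2)) = _
    rw [show τ * (1 / Real.sqrt (1+τ^2)) * (1 / Real.sqrt (1+τ^2))
        = τ / (Real.sqrt (1+τ^2))^2 by ring, hss]
  -- continuity facts
  have hcontPhi : Continuous fun x => gcdf (τ*x) :=
    continuous_gcdf.comp (continuous_const.mul continuous_id)
  have hcontPhi' : Continuous fun x => gcdf (-(τ*x)) :=
    continuous_gcdf.comp ((continuous_const.mul continuous_id).neg)
  have hcontphi : Continuous fun x => gpdf (τ*x) :=
    continuous_gpdf.comp (continuous_const.mul continuous_id)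
  -- derivative of composed functions
  have hτd : ∀ x : ℝ, HasDerivAt (fun y => gcdf (τ*y)) (τ * gpdf (τ*x)) x := by
    intro x
    have := (hasDerivAt_gcdf (τ*x)).comp x ((hasDerivAt_id x).const_mul τ)
    simpa [Function.comp_def, mul_comm] using this
  have hτp : ∀ x : ℝ, HasDerivAt (fun y => gpdf (τ*y)) (τ * (-(τ*x) * gpdf (τ*x))) x := by
    intro x
    have := (hasDerivAt_gpdf (τ*x)).comp x ((hasDerivAt_id x).const_mul τ)
    simpa [Function.comp_def, mul_comm] using this
  -- FTC part
  have hG : ∀ x : ℝ, HasDerivAt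
      (fun y => -y * gpdf y * gcdf (τ*y) - (τ/(1+τ^2)) * (gpdf y * gpdf (τ*y)))
      (x^2 * gcdf (τ*x) * gpdf x - gcdf (τ*x) * gpdf x) x := by
    intro x
    have h1 := hasDerivAt_gpdf x
    have hA := (((hasDerivAt_id x).neg.mul h1).mul (hτd x))
    have hB := (h1.mul (hτp x)).const_mul (τ/(1+τ^2))
    have hAB := hA.sub hB
    refine hAB.congr_deriv ?_
    simp only [Pi.mul_apply, Pi.neg_apply, id_eq]
    have hne : (1+τ^2) ≠ 0 := ne_of_gt h1τ
    field_simp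
    ring
  have hi1 : IntervalIntegrable (fun x => x^2 * gcdf (τ*x) * gpdf x) volume 0 α :=
    (((continuous_pow 2).mul hcontPhi).mul continuous_gpdf).intervalIntegrable _ _
  have hi2 : IntervalIntegrable (fun x => gcdf (τ*x) * gpdf x) volume 0 α :=
    (hcontPhi.mul continuous_gpdf).intervalIntegrable _ _
  have hftc := intervalIntegral.integral_eq_sub_of_hasDerivAt
    (f := fun y => -y * gpdf y * gcdf (τ*y) - (τ/(1+τ^2)) * (gpdf y * gpdf (τ*y)))
    (fun x _ => hG x) (hi1.sub hi2)
  rw [intervalIntegral.integral_sub hi1 hi2] at hftc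
  -- I₁ computation
  have hInt : Integrable (fun x => gcdf (-(τ*x)) * gpdf x) :=
    integrable_gpdf.bdd_mul hcontPhi'.aestronglyMeasurable
      (c := 1) (Filter.Eventually.of_forall fun x => by
        rw [Real.norm_eq_abs, abs_of_nonneg (gcdf_nonneg _)]; exact gcdf_le_one _)
  have hbv : bvcdf ρ α 0 - bvcdf ρ 0 0 = ∫ x in (0:ℝ)..α, gcdf (-(τ*x)) * gpdf x := by
    rw [hρ_def, bvcdf_eq τ α, bvcdf_eq τ 0]
    exact intervalIntegral.integral_Iic_sub_Iic hInt.integrableOn hInt.integrableOn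
  have hI₁ : I₁ = ∫ x in (0:ℝ)..α, gcdf (τ*x) * gpdf x := by
    show gcdf α - 1/2 - (bvcdf ρ α 0 - bvcdf ρ 0 0) = _
    rw [hbv, ← gcdf_zero, gcdf_sub 0 α,
      ← intervalIntegral.integral_sub integrable_gpdf.intervalIntegrable
        hInt.intervalIntegrable]
    apply intervalIntegral.integral_congr
    intro x _
    have := gcdf_neg (τ*x)
    dsimp only
    rw [this]
    ring
  -- assemble
  have hGα : (-α * gpdf α * gcdf (τ*α) - (τ/(1+τ^2)) * (gpdf α * gpdf (τ*α)))
      - (-(0:ℝ) * gpdf 0 * gcdf (τ*0) - (τ/(1+τ^2)) * (gpdf 0 * gpdf (τ*0)))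
      = -α * gpdf α * gcdf (τ*α) - (τ/(1+τ^2)) * (gpdf α * gpdf (τ*α))
        + (τ/(1+τ^2)) * gpdf 0 ^ 2 := by
    rw [mul_zero τ]
    ring
  rw [hρσ, hI₁]
  rw [hGα] at hftc
  linarith [hftc]
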